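/- Let a < b be real numbers and X, u, v : ℝ → ℝ. Assume: u is differentiable at every point of (-∞, b] with derivative u'; the product v·X is differentiable at every point of (-∞, a) ∪ (a, b), and w : ℝ → ℝ equals its derivative on that set; v·X has finite left and right limits (vX)(a⁻) and (vX)(a⁺) at a, and its value at b equals its left limit at b; (vX)(x)·u(x) → 0 as x → −∞; and both v·X·u' and w·u are Lebesgue integrable on (-∞, b]. Then ∫_{(-∞,b]} v(x) X(x) u'(x) dx = (vX)(a⁻)·u(a) + (vX)(b)·u(b) − (vX)(a⁺)·u(a) − ∫_{(-∞,b]} w(x) u(x) dx. -/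

import Mathlib

open MeasureTheory Filter Topology Set

/-- Integration by parts on `(-∞, b]`, split at the reset point `a`, for the pairing
`⟨v, A u⟩ = ∫ v X u'` of the hybrid Frobenius-Perron construction. -/
theorem hybrid_integration_by_parts
    (a b : ℝ) (hab : a < b) (X u v u' w : ℝ → ℝ) (vXam vXap : ℝ)
    (hu : ∀ x ∈ Set.Iic b, HasDerivAt u (u' x) x)
    (hvX : ∀ x ∈ Set.Iio a ∪ Set.Ioo a b, HasDerivAt (fun y => v y * X y) (w x) x)
    (hlim_am : Tendsto (fun y => v y * X y) (nhdsWithin a (Set.Iio a)) (nhds vXam))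
    (hlim_ap : Tendsto (fun y => v y * X y) (nhdsWithin a (Set.Ioi a)) (nhds vXap))
    (hlim_b : Tendsto (fun y => v y * X y) (nhdsWithin b (Set.Iio b)) (nhds (v b * X b)))
    (hbot : Tendsto (fun x => v x * X x * u x) atBot (nhds 0))
    (hint1 : IntegrableOn (fun x => v x * X x * u' x) (Set.Iic b))
    (hint2 : IntegrableOn (fun x => w x * u x) (Set.Iic b)) :
    ∫ x in Set.Iic b, v x * X x * u' x
      = vXam * u a + (v b * X b) * u b - vXap * u a
        - ∫ x in Set.Iic b, w x * u x := by
  set F : ℝ → ℝ := fun x => v x * X x * u x with hF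
  set G : ℝ → ℝ := fun x => w x * u x + v x * X x * u' x with hG
  -- derivative of F on Iio a ∪ Ioo a b
  have hFderiv : ∀ x ∈ Set.Iio a ∪ Set.Ioo a b, HasDerivAt F (G x) x := by
    intro x hx
    have hxb : x ∈ Set.Iic b := by
      rcases hx with hx | hx
      · exact le_of_lt (hx.trans hab)
      · exact hx.2.le
    have := (hvX x hx).mul (hu x hxb)
    exact this
  have huc : ∀ x ∈ Set.Iic b, ContinuousAt u x := fun x hx => (hu x hx).continuousAt
  -- integrability of G
  have hGint : IntegrableOn G (Set.Iic b) := hint2.add hint1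
  -- modified F for the left piece
  set Fm : ℝ → ℝ := Function.update F a (vXam * u a) with hFm
  have hFm_eq : ∀ x, x ≠ a → Fm x = F x := fun x hx => Function.update_of_ne hx _ _
  have hlimFam : Tendsto F (nhdsWithin a (Set.Iio a)) (nhds (vXam * u a)) := by
    exact hlim_am.mul (((huc a (le_of_lt hab)).continuousWithinAt).tendsto)
  have hFmcont : ContinuousWithinAt Fm (Set.Iic a) a := by
    have h1 : Set.Iic a = Set.Iio a ∪ {a} := by
      ext x; simp [le_iff_lt_or_eq]
    unfold ContinuousWithinAt
    rw [h1, nhdsWithin_union, tendsto_sup]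
    constructor
    · have : Tendsto Fm (nhdsWithin a (Set.Iio a)) (nhds (vXam * u a)) := by
        apply hlimFam.congr'
        filter_upwards [self_mem_nhdsWithin] with x hx
        exact (hFm_eq x (ne_of_lt hx)).symm
      simpa [Fm, Function.update_self] using this
    · simp [nhdsWithin_singleton, Fm, Function.update_self, tendsto_pure_left]
      intro s hs; exact mem_of_mem_nhds hs
  have hFmderiv : ∀ x ∈ Set.Iio a, HasDerivAt Fm (G x) x := by
    intro x hx
    apply (hFderiv x (Or.inl hx)).congr_of_eventuallyEq
    filter_upwards [Iio_mem_nhds hx] with y hy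
    exact hFm_eq y (ne_of_lt hy)
  have hFmbot : Tendsto Fm atBot (nhds 0) := by
    apply hbot.congr'
    filter_upwards [Iio_mem_atBot a] with x hx
    exact (hFm_eq x (ne_of_lt hx)).symm
  have hGint_a : IntegrableOn G (Set.Iic a) :=
    hGint.mono (Set.Iic_subset_Iic.2 hab.le) le_rfl
  have part1 : ∫ x in Set.Iic a, G x = vXam * u a := by
    have := integral_Iic_of_hasDerivAt_of_tendsto hFmcont hFmderiv hGint_a hFmbot
    simpa [Fm, Function.update_self] using this
  -- middle piece
  have hlimFap : Tendsto F (nhdsWithin a (Set.Ioi a)) (nhds (vXap * u a)) :=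
    hlim_ap.mul (((huc a (le_of_lt hab)).continuousWithinAt).tendsto)
  have hlimFb : Tendsto F (nhdsWithin b (Set.Iio b)) (nhds (v b * X b * u b)) :=
    hlim_b.mul (((huc b Set.self_mem_Iic).continuousWithinAt).tendsto)
  have hGint_ab : IntervalIntegrable G volume a b := by
    rw [intervalIntegrable_iff_integrableOn_Ioc_of_le hab.le]
    exact hGint.mono (fun y hy => hy.2) le_rfl
  have part2 : ∫ x in a..b, G x = v b * X b * u b - vXap * u a :=
    intervalIntegral.integral_eq_sub_of_hasDerivAt_of_tendsto hab
      (fun x hx => hFderiv x (Or.inr hx)) hGint_ab hlimFap hlimFb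
  -- splitting
  have hsplit : ∫ x in Set.Iic b, G x
      = (∫ x in Set.Iic a, G x) + ∫ x in Set.Ioc a b, G x := by
    rw [← setIntegral_union (Set.Iic_disjoint_Ioc le_rfl) measurableSet_Ioc
      hGint_a (hGint.mono (fun y hy => hy.2) le_rfl),
      Set.Iic_union_Ioc_eq_Iic hab.le]
  have hioc : ∫ x in Set.Ioc a b, G x = ∫ x in a..b, G x :=
    (intervalIntegral.integral_of_le hab.le).symm
  have hGval : ∫ x in Set.Iic b, G x
      = (∫ x in Set.Iic b, w x * u x) + ∫ x in Set.Iic b, v x * X x * u' x :=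
    integral_add hint2 hint1
  have : (∫ x in Set.Iic b, w x * u x) + ∫ x in Set.Iic b, v x * X x * u' x
      = vXam * u a + (v b * X b * u b - vXap * u a) := by
    rw [← hGval, hsplit, part1, hioc, part2]
  linarith
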